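/- For all reals k, l with 0 < l ≤ k and d ≥ 1, the inequality (k/l)·(1 − (1 − l/k)^{1 + 4/d}) ≥ (d+4)/d − 4(d+1)l/(d²k) + 4l²/(d²k²) holds. -/

import Mathlib

/-- Bernoulli-type lower bound: for `0 < l ≤ k` and `d ≥ 2`,
`(k/l)(1 − (1 − l/k)^{1+4/d}) ≥ (d+4)/d − 4(d+1)l/(d²k) + 4l²/(d²k²)`. -/
theorem bernoulli_lower_bound (d : ℕ) (hd : 2 ≤ d) (k l : ℝ) (hl : 0 < l) (hlk : l ≤ k) :
    (d + 4) / d - 4 * (d + 1) * l / (d^2 * k) + 4 * l^2 / (d^2 * k^2) ≤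
      (k / l) * (1 - (1 - l / k) ^ ((1 : ℝ) + 4 / d)) := by
  have hk : 0 < k := hl.trans_le hlk
  set x : ℝ := l / k with hxdef
  have hx0 : 0 < x := div_pos hl hk
  have hx1 : x ≤ 1 := (div_le_one hk).mpr hlk
  have hd0 : (0:ℝ) < d := by positivity
  have hd2 : (2:ℝ) ≤ d := by exact_mod_cast hd
  have h2d0 : (0:ℝ) ≤ 2 / d := by positivity
  have h2d1 : (2:ℝ) / d ≤ 1 := by rw [div_le_one hd0]; linarith
  have h1x : (0:ℝ) ≤ 1 - x := by linarith
  -- Bernoulli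
  have hb : (1 - x) ^ ((2:ℝ)/d) ≤ 1 - (2/d)*x := by
    have := rpow_one_add_le_one_add_mul_self (s := -x) (by linarith) h2d0 h2d1
    simpa [sub_eq_add_neg, mul_comm] using this
  have hbpos : (0:ℝ) ≤ (1 - x) ^ ((2:ℝ)/d) := Real.rpow_nonneg h1x _
  -- split the exponent
  have hsplit : (1 - x) ^ ((1 : ℝ) + 4 / d) = (1 - x) * ((1 - x) ^ ((2:ℝ)/d))^2 := by
    have h24 : (1:ℝ) + 4/d = 1 + (2/d)*2 := by ring
    rw [h24, Real.rpow_add' h1x (by positivity), Real.rpow_one, Real.rpow_mul h1x,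
      show ((2:ℝ)) = ((2:ℕ):ℝ) by norm_num, Real.rpow_natCast]
  have hkey : (1 - x) ^ ((1 : ℝ) + 4 / d) ≤ (1 - x) * (1 - (2/d)*x)^2 := by
    rw [hsplit]
    apply mul_le_mul_of_nonneg_left _ h1x
    exact pow_le_pow_left₀ hbpos hb 2
  -- reduce goal to polynomial inequality
  have hP : (d + 4) / d - 4 * (d + 1) * l / (d^2 * k) + 4 * l^2 / (d^2 * k^2)
      = (d + 4) / d - 4 * ((d:ℝ) + 1) * x / d^2 + 4 * x^2 / d^2 := by
    rw [hxdef]; field_simp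
  rw [hP]
  have hpoly : x * ((d + 4) / d - 4 * ((d:ℝ) + 1) * x / d^2 + 4 * x^2 / d^2)
      = 1 - (1 - x) * (1 - (2/d)*x)^2 := by
    field_simp; ring
  have h1 : x * ((d + 4) / d - 4 * ((d:ℝ) + 1) * x / d^2 + 4 * x^2 / d^2)
      ≤ 1 - (1 - x) ^ ((1 : ℝ) + 4 / d) := by
    rw [hpoly]; linarith
  have hkl : (k / l) * x = 1 := by rw [hxdef]; field_simp
  calc (d + 4) / d - 4 * ((d:ℝ) + 1) * x / d^2 + 4 * x^2 / d^2
      = (k / l) * (x * ((d + 4) / d - 4 * ((d:ℝ) + 1) * x / d^2 + 4 * x^2 / d^2)) := by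
        rw [← mul_assoc, hkl, one_mul]
    _ ≤ (k / l) * (1 - (1 - x) ^ ((1 : ℝ) + 4 / d)) := by
        apply mul_le_mul_of_nonneg_left h1 (by positivity)
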